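/- For every f ∈ [0,1] there exists a constant C > 0 such that for all t ≥ 0 and all x ∈ ℝ², ‖exp(−t·M(f))·x‖ ≤ C·e^{−t/2}·‖x‖; in particular every solution of the linearized mean-field equation δn′(t) = −M(f)·δn(t) converges to 0 exponentially fast with rate at least 1/2, uniformly in f. -/

import Mathlib

/-- `M(f) = [[1, f], [1−f, 1]]`, the negative of the Jacobian of the mean-field
Naming Game dynamics. -/
def NG_M (f : ℝ) : Matrix (Fin 2) (Fin 2) ℝ := !![1, f; 1 - f, 1]

open NormedSpace

/-- The off-diagonal part of `M(f)`. -/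
def NG_N (f : ℝ) : Matrix (Fin 2) (Fin 2) ℝ := !![0, f; 1 - f, 0]

lemma NG_M_eq (f : ℝ) : NG_M f = 1 + NG_N f := by
  ext i j
  fin_cases i <;> fin_cases j <;>
    simp [NG_M, NG_N, Matrix.one_apply]

lemma NG_N_sq (f : ℝ) : NG_N f ^ 2 = (f * (1 - f)) • (1 : Matrix (Fin 2) (Fin 2) ℝ) := by
  ext i j
  fin_cases i <;> fin_cases j <;>
    simp [NG_N, pow_two, Matrix.mul_apply, Fin.sum_univ_two, Matrix.one_apply] <;> ring

lemma NG_N_pow_even (f : ℝ) (k : ℕ) :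
    NG_N f ^ (2 * k) = ((f * (1 - f)) ^ k) • (1 : Matrix (Fin 2) (Fin 2) ℝ) := by
  induction k with
  | zero => simp
  | succ k ih =>
      have h : 2 * (k + 1) = 2 * k + 2 := by ring
      rw [h, pow_add, ih, NG_N_sq, smul_mul_smul_comm, one_mul, ← pow_succ]

lemma NG_N_pow_odd (f : ℝ) (k : ℕ) :
    NG_N f ^ (2 * k + 1) = ((f * (1 - f)) ^ k) • NG_N f := by
  rw [pow_succ, NG_N_pow_even, smul_mul_assoc, one_mul]

lemma NG_exp_smul_one (t : ℝ) :
    exp ((-t) • (1 : Matrix (Fin 2) (Fin 2) ℝ)) =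
      Real.exp (-t) • (1 : Matrix (Fin 2) (Fin 2) ℝ) := by
  rw [Matrix.smul_one_eq_diagonal, Matrix.exp_diagonal, Matrix.smul_one_eq_diagonal]
  congr 1
  funext i
  rw [Pi.exp_def, ← Real.exp_eq_exp_ℝ]

lemma NG_exp_split (f t : ℝ) :
    exp ((-t) • NG_M f) = Real.exp (-t) • exp ((-t) • NG_N f) := by
  have hsplit : (-t) • NG_M f = (-t) • (1 : Matrix (Fin 2) (Fin 2) ℝ) + (-t) • NG_N f := by
    rw [NG_M_eq, smul_add]
  have hcomm : Commute ((-t) • (1 : Matrix (Fin 2) (Fin 2) ℝ)) ((-t) • NG_N f) :=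
    ((Commute.one_left (NG_N f)).smul_left (-t)).smul_right (-t)
  rw [hsplit, Matrix.exp_add_of_commute _ _ hcomm, NG_exp_smul_one, smul_mul_assoc, one_mul]

lemma NG_exp_N_mulVec_le (f : ℝ) (hf : f ∈ Set.Icc (0 : ℝ) 1) (t : ℝ) (ht : 0 ≤ t)
    (x : Fin 2 → ℝ) :
    ‖(exp ((-t) • NG_N f)).mulVec x‖ ≤ 2 * Real.exp (t / 2) * ‖x‖ := by
  obtain ⟨hf0, hf1⟩ := hf
  letI : SeminormedRing (Matrix (Fin 2) (Fin 2) ℝ) := Matrix.linftyOpSemiNormedRing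
  letI : NormedRing (Matrix (Fin 2) (Fin 2) ℝ) := Matrix.linftyOpNormedRing
  letI : NormedAlgebra ℝ (Matrix (Fin 2) (Fin 2) ℝ) := Matrix.linftyOpNormedAlgebra
  letI : NormOneClass (Matrix (Fin 2) (Fin 2) ℝ) := Matrix.linfty_opNormOneClass
  -- basic inequalities
  have hc0 : (0 : ℝ) ≤ f * (1 - f) := mul_nonneg hf0 (by linarith)
  have hc4 : f * (1 - f) ≤ 1 / 4 := by nlinarith [sq_nonneg (2 * f - 1)]
  have hck : ∀ k : ℕ, (f * (1 - f)) ^ k ≤ (1 / 2 : ℝ) ^ (2 * k) := by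
    intro k
    calc (f * (1 - f)) ^ k ≤ (1 / 4 : ℝ) ^ k := pow_le_pow_left₀ hc0 hc4 k
      _ = (1 / 2 : ℝ) ^ (2 * k) := by rw [pow_mul]; norm_num
  -- norm of NG_N
  have hN1 : ‖NG_N f‖ ≤ 1 := by
    rw [Matrix.linfty_opNorm_def]
    have h : ((Finset.univ : Finset (Fin 2)).sup fun i => ∑ j, ‖NG_N f i j‖₊) ≤ 1 := by
      apply Finset.sup_le
      intro i _
      rw [← NNReal.coe_le_coe]
      fin_cases i <;>
        · push_cast [Fin.sum_univ_two, NG_N]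
          simp [Real.norm_eq_abs, abs_of_nonneg, hf0, sub_nonneg.2 hf1,
            abs_of_nonneg (sub_nonneg.2 hf1)]
          try linarith
    exact_mod_cast h
  -- norm of powers of NG_N
  have hNpow : ∀ n : ℕ, ‖NG_N f ^ n‖ ≤ 2 * (1 / 2 : ℝ) ^ n := by
    intro n
    rcases Nat.even_or_odd n with ⟨k, hk⟩ | ⟨k, hk⟩
    · have hn : n = 2 * k := by omega
      subst hn
      rw [NG_N_pow_even, norm_smul, Real.norm_of_nonneg (pow_nonneg hc0 k), norm_one, mul_one]
      have h2 : (0 : ℝ) < (1 / 2 : ℝ) ^ (2 * k) := by positivity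
      have := hck k
      linarith
    · subst hk
      rw [NG_N_pow_odd, norm_smul, Real.norm_of_nonneg (pow_nonneg hc0 k)]
      have h2 : (f * (1 - f)) ^ k * ‖NG_N f‖ ≤ (1 / 2 : ℝ) ^ (2 * k) * 1 :=
        mul_le_mul (hck k) hN1 (norm_nonneg _) (by positivity)
      calc (f * (1 - f)) ^ k * ‖NG_N f‖ ≤ (1 / 2 : ℝ) ^ (2 * k) * 1 := h2
        _ = 2 * (1 / 2 : ℝ) ^ (2 * k + 1) := by ring
  -- norm of the exponential
  have hexp : ‖exp ((-t) • NG_N f)‖ ≤ 2 * Real.exp (t / 2) := by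
    rw [exp_eq_tsum ℝ]
    have hsum : Summable fun n : ℕ => ‖((n.factorial : ℝ)⁻¹) • ((-t) • NG_N f) ^ n‖ :=
      norm_expSeries_summable' ((-t) • NG_N f)
    have hg : Summable fun n : ℕ => 2 * ((t / 2) ^ n / (n.factorial : ℝ)) :=
      (Real.summable_pow_div_factorial (t / 2)).mul_left 2
    have hbound : ∀ n : ℕ, ‖((n.factorial : ℝ)⁻¹) • ((-t) • NG_N f) ^ n‖ ≤
        2 * ((t / 2) ^ n / (n.factorial : ℝ)) := by
      intro n
      rw [smul_pow, norm_smul, norm_smul]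
      have h1 : ‖((n.factorial : ℝ)⁻¹)‖ = ((n.factorial : ℝ))⁻¹ :=
        Real.norm_of_nonneg (by positivity)
      have h2 : ‖(-t) ^ n‖ = t ^ n := by
        rw [Real.norm_eq_abs, abs_pow, abs_neg, abs_of_nonneg ht]
      rw [h1, h2]
      have h4 : ((n.factorial : ℝ))⁻¹ * (t ^ n * ‖NG_N f ^ n‖) ≤
          ((n.factorial : ℝ))⁻¹ * (t ^ n * (2 * (1 / 2) ^ n)) := by
        apply mul_le_mul_of_nonneg_left _ (by positivity)
        exact mul_le_mul_of_nonneg_left (hNpow n) (by positivity)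
      have hfacpos : (0 : ℝ) < (n.factorial : ℝ) := by positivity
      calc ((n.factorial : ℝ))⁻¹ * (t ^ n * ‖NG_N f ^ n‖)
          ≤ ((n.factorial : ℝ))⁻¹ * (t ^ n * (2 * (1 / 2) ^ n)) := h4
        _ = 2 * ((t / 2) ^ n / (n.factorial : ℝ)) := by
            rw [div_pow]
            field_simp
            rw [one_pow, mul_one, ← mul_pow]; congr 1; ring
    calc ‖∑' n : ℕ, ((n.factorial : ℝ)⁻¹) • ((-t) • NG_N f) ^ n‖
        ≤ ∑' n : ℕ, ‖((n.factorial : ℝ)⁻¹) • ((-t) • NG_N f) ^ n‖ := norm_tsum_le_tsum_norm hsum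
      _ ≤ ∑' n : ℕ, 2 * ((t / 2) ^ n / (n.factorial : ℝ)) := Summable.tsum_le_tsum hbound hsum hg
      _ = 2 * ∑' n : ℕ, ((t / 2) ^ n / (n.factorial : ℝ)) := tsum_mul_left
      _ = 2 * Real.exp (t / 2) := by
          rw [Real.exp_eq_exp_ℝ, exp_eq_tsum_div]
  calc ‖(exp ((-t) • NG_N f)).mulVec x‖
      ≤ ‖exp ((-t) • NG_N f)‖ * ‖x‖ := Matrix.linfty_opNorm_mulVec _ _
    _ ≤ 2 * Real.exp (t / 2) * ‖x‖ :=
        mul_le_mul_of_nonneg_right hexp (norm_nonneg x)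

/-- For every `f ∈ [0,1]` there is `C > 0` such that for all `t ≥ 0` and
`x : ℝ²`, `‖exp(−t·M(f))·x‖ ≤ C·e^{−t/2}·‖x‖`: every solution of the
linearized mean-field equation `δn′ = −M(f)·δn` decays exponentially with rate
at least `1/2`. -/
theorem ng_linearized_exponential_decay (f : ℝ) (hf : f ∈ Set.Icc (0 : ℝ) 1) :
    ∃ C : ℝ, 0 < C ∧ ∀ t : ℝ, 0 ≤ t → ∀ x : Fin 2 → ℝ,
      ‖(NormedSpace.exp ((-t) • NG_M f)).mulVec x‖ ≤
        C * Real.exp (-t / 2) * ‖x‖ := by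
  refine ⟨2, by norm_num, fun t ht x => ?_⟩
  rw [NG_exp_split f t, Matrix.smul_mulVec, norm_smul,
    Real.norm_of_nonneg (Real.exp_pos (-t)).le]
  have h3 := NG_exp_N_mulVec_le f hf t ht x
  calc Real.exp (-t) * ‖(NormedSpace.exp ((-t) • NG_N f)).mulVec x‖
      ≤ Real.exp (-t) * (2 * Real.exp (t / 2) * ‖x‖) :=
        mul_le_mul_of_nonneg_left h3 (Real.exp_pos (-t)).le
    _ = 2 * Real.exp (-t / 2) * ‖x‖ := by
        rw [show (-t / 2 : ℝ) = -t + t / 2 by ring, Real.exp_add]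
        ring
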